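/- Let n ≥ 1 and let U_1, ..., U_n be topological spaces with chosen closed subsets ∂U_j ⊆ cl(U_j) such that ∂U_1 is a single point which is a strong deformation retract of cl(U_1) (e.g. cl(U_1) contractible to that point) and each cl(U_j) is contractible. Then the subset ⋃_{j=1}^n cl(U_1) × ... × cl(U_{j-1}) × ∂U_j × cl(U_{j+1}) × ... × cl(U_n) of the product cl(U_1) × ... × cl(U_n) is contractible, provided ∂U_1 is a one-point set and each cl(U_j) is contractible. -/

import Mathlib

open unitInterval

/-- Step (4) in the proof of Theorem 2B.1: with `C j` playing the role of `cl(U_j)` and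
`B j ⊆ C j` the role of `∂U_j`, if `B 0` is a one-point set `{p}` which is a strong
deformation retract of `C 0` (witnessed by the homotopy `H`), and each `C j` is
contractible, then the union of the faces
`⋃ j, C 0 × ⋯ × C (j-1) × B j × C (j+1) × ⋯ × C (n-1)`,
i.e. `{x ∈ ∏ i, C i | ∃ j, x j ∈ B j}`, is contractible. -/
theorem stmt_10 (n : ℕ) (hn : 0 < n)
    (C : Fin n → Type*) [∀ j, TopologicalSpace (C j)]
    (B : ∀ j, Set (C j)) (hBclosed : ∀ j, IsClosed (B j))
    (hcontr : ∀ j, ContractibleSpace (C j))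
    (p : C ⟨0, hn⟩) (hB0 : B ⟨0, hn⟩ = {p})
    (H : C(C ⟨0, hn⟩ × I, C ⟨0, hn⟩))
    (hH0 : ∀ x, H (x, 0) = x) (hH1 : ∀ x, H (x, 1) = p)
    (hHp : ∀ t, H (p, t) = p) :
    ContractibleSpace {x : ∀ i, C i // ∃ j, x j ∈ B j} := by
  classical
  have hG : ∀ j, ∃ cj : C j, (ContinuousMap.id (C j)).Homotopic (ContinuousMap.const _ cj) :=
    fun j => (contractible_iff_id_nullhomotopic (C j)).mp (hcontr j)
  choose c hc using hG
  let G : ∀ j, (ContinuousMap.id (C j)).Homotopy (ContinuousMap.const _ (c j)) :=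
    fun j => (hc j).some
  have hpB : p ∈ B ⟨0, hn⟩ := by rw [hB0]; exact Set.mem_singleton _
  -- the target point
  have hq0 : ∃ j, Function.update (fun j => c j) ⟨0, hn⟩ p j ∈ B j :=
    ⟨⟨0, hn⟩, by rw [Function.update_self]; exact hpB⟩
  let q : {x : ∀ i, C i // ∃ j, x j ∈ B j} := ⟨Function.update (fun j => c j) ⟨0, hn⟩ p, hq0⟩
  -- the intermediate map g : set coordinate 0 to p
  have hmemg : ∀ x : {x : ∀ i, C i // ∃ j, x j ∈ B j},
      ∃ j, Function.update x.1 ⟨0, hn⟩ p j ∈ B j :=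
    fun x => ⟨⟨0, hn⟩, by rw [Function.update_self]; exact hpB⟩
  have hcontg : Continuous fun x : {x : ∀ i, C i // ∃ j, x j ∈ B j} =>
      Function.update x.1 ⟨0, hn⟩ p :=
    (continuous_subtype_val).update (⟨0, hn⟩ : Fin n) continuous_const
  let g : C({x : ∀ i, C i // ∃ j, x j ∈ B j}, {x : ∀ i, C i // ∃ j, x j ∈ B j}) :=
    ⟨fun x => ⟨Function.update x.1 ⟨0, hn⟩ p, hmemg x⟩, hcontg.subtype_mk _⟩
  -- stage 1 membership
  have hmem1 : ∀ (t : I) (x : {x : ∀ i, C i // ∃ j, x j ∈ B j}),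
      ∃ j, Function.update x.1 ⟨0, hn⟩ (H (x.1 ⟨0, hn⟩, t)) j ∈ B j := by
    intro t x
    obtain ⟨j, hj⟩ := x.2
    by_cases hjz : j = ⟨0, hn⟩
    · refine ⟨⟨0, hn⟩, ?_⟩
      rw [Function.update_self]
      have hx : x.1 ⟨0, hn⟩ = p := by
        have := hjz ▸ hj
        rw [hB0] at this; exact this
      rw [hx, hHp]; exact hpB
    · exact ⟨j, by rwa [Function.update_of_ne hjz]⟩
  have hcont1 : Continuous fun xt : I × {x : ∀ i, C i // ∃ j, x j ∈ B j} =>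
      Function.update xt.2.1 ⟨0, hn⟩ (H (xt.2.1 ⟨0, hn⟩, xt.1)) :=
    (continuous_subtype_val.comp continuous_snd).update _
      (H.continuous.comp (((continuous_apply (⟨0, hn⟩ : Fin n)).comp
        (continuous_subtype_val.comp continuous_snd)).prodMk continuous_fst))
  let h1 : (ContinuousMap.id {x : ∀ i, C i // ∃ j, x j ∈ B j}).Homotopy g :=
    { toFun := fun xt =>
        ⟨Function.update xt.2.1 ⟨0, hn⟩ (H (xt.2.1 ⟨0, hn⟩, xt.1)), hmem1 xt.1 xt.2⟩
      continuous_toFun := hcont1.subtype_mk _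
      map_zero_left := by
        intro x
        apply Subtype.ext
        show Function.update x.1 ⟨0, hn⟩ (H (x.1 ⟨0, hn⟩, 0)) = x.1
        rw [hH0, Function.update_eq_self]
      map_one_left := by
        intro x
        apply Subtype.ext
        show Function.update x.1 ⟨0, hn⟩ (H (x.1 ⟨0, hn⟩, 1)) = Function.update x.1 ⟨0, hn⟩ p
        rw [hH1] }
  -- stage 2
  have hmem2 : ∀ (t : I) (x : {x : ∀ i, C i // ∃ j, x j ∈ B j}),
      ∃ j, Function.update (fun j => G j (t, x.1 j)) ⟨0, hn⟩ p j ∈ B j :=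
    fun t x => ⟨⟨0, hn⟩, by rw [Function.update_self]; exact hpB⟩
  have hcont2 : Continuous fun xt : I × {x : ∀ i, C i // ∃ j, x j ∈ B j} =>
      Function.update (fun j => G j (xt.1, xt.2.1 j)) ⟨0, hn⟩ p :=
    Continuous.update
      (continuous_pi fun j => (G j).continuous.comp
        (continuous_fst.prodMk ((continuous_apply j).comp
          (continuous_subtype_val.comp continuous_snd))))
      ⟨0, hn⟩ continuous_const
  let h2 : g.Homotopy (ContinuousMap.const _ q) :=
    { toFun := fun xt =>
        ⟨Function.update (fun j => G j (xt.1, xt.2.1 j)) ⟨0, hn⟩ p, hmem2 xt.1 xt.2⟩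
      continuous_toFun := hcont2.subtype_mk _
      map_zero_left := by
        intro x
        apply Subtype.ext
        show Function.update (fun j => G j (0, x.1 j)) ⟨0, hn⟩ p
          = Function.update x.1 ⟨0, hn⟩ p
        funext i
        by_cases hiz : i = ⟨0, hn⟩
        · subst hiz; rw [Function.update_self, Function.update_self]
        · rw [Function.update_of_ne hiz, Function.update_of_ne hiz]
          exact (G i).apply_zero _
      map_one_left := by
        intro x
        apply Subtype.ext
        show Function.update (fun j => G j (1, x.1 j)) ⟨0, hn⟩ p
          = Function.update (fun j => c j) ⟨0, hn⟩ p
        funext i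
        by_cases hiz : i = ⟨0, hn⟩
        · subst hiz; rw [Function.update_self, Function.update_self]
        · rw [Function.update_of_ne hiz, Function.update_of_ne hiz]
          exact (G i).apply_one _ }
  rw [contractible_iff_id_nullhomotopic]
  exact ⟨q, ⟨h1.trans h2⟩⟩
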